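/- (Case I) Let ψ be an approximating function and g a dimension function satisfying x^{s₁} < g(x) < x^{s₂} for small x with 0 < s₁, 0 < s₂ ≤ 1, 2s₁ < 3s₂, and q⁻¹g(q) → ∞ as q → 0. If ∑_{q=1}^∞ g(ψ(q)/q)q² < ∞, then the set of x ∈ [0,1] such that |a₂x² + a₁x + a₀| < ψ(max(|a₁|,|a₂|)) for infinitely many integer triples (a₀,a₁,a₂) for which the quadratic a₂X² + a₁X + a₀ has a repeated root, has g-dimensional Hausdorff measure zero. -/

import Mathlib

open MeasureTheory
open scoped ENNReal

/-- A quadratic with repeated root has the form `k(ux+v)²`. -/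
lemma stmt15_param (a₀ a₁ a₂ : ℤ) (h₂ : a₂ ≠ 0) (h : a₁ ^ 2 - 4 * a₂ * a₀ = 0) :
    ∃ k u v : ℤ, k ≠ 0 ∧ 0 < u ∧ a₂ = k * u ^ 2 ∧ a₁ = 2 * (k * u * v) ∧ a₀ = k * v ^ 2 := by
  have h' : a₁ ^ 2 = 4 * a₂ * a₀ := by linarith
  have h2 : (2 : ℤ) ∣ a₁ := by
    have : (2:ℤ) ∣ a₁ ^ 2 := ⟨2 * a₂ * a₀, by linarith⟩
    exact Int.prime_two.dvd_of_dvd_pow this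
  obtain ⟨c, hc⟩ := h2
  have hcc : c ^ 2 = a₂ * a₀ := by
    have h4 : (2 * c) ^ 2 = 4 * a₂ * a₀ := hc ▸ h'
    nlinarith [h4]
  set d : ℤ := (Int.gcd a₂ c : ℤ) with hd
  have hdpos : 0 < Int.gcd a₂ c := Int.gcd_pos_of_ne_zero_left c h₂
  have hdne : d ≠ 0 := by positivity
  have hdvd₁ : d ∣ a₂ := Int.gcd_dvd_left a₂ c
  have hdvd₂ : d ∣ c := Int.gcd_dvd_right a₂ c
  set u' : ℤ := a₂ / d with hu'
  set c' : ℤ := c / d with hc'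
  have ha₂ : a₂ = d * u' := (Int.mul_ediv_cancel' hdvd₁).symm
  have hcd : c = d * c' := (Int.mul_ediv_cancel' hdvd₂).symm
  have hcop : IsCoprime u' c' := by
    rw [Int.isCoprime_iff_gcd_eq_one]
    exact Int.gcd_div_gcd_div_gcd hdpos
  have key : d * c' ^ 2 = u' * a₀ := by
    have h5 : (d * c') ^ 2 = d * u' * a₀ := by rw [← hcd, ← ha₂]; exact hcc
    apply mul_left_cancel₀ hdne
    linear_combination h5
  have hu'dvd : u' ∣ d := by
    have h1 : u' ∣ d * c' ^ 2 := ⟨a₀, key⟩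
    exact (hcop.pow_right (n := 2)).dvd_of_dvd_mul_right h1
  obtain ⟨f, hf⟩ := hu'dvd
  have hu'ne : u' ≠ 0 := by
    intro h0; apply h₂; rw [ha₂, h0, mul_zero]
  have ha₂' : a₂ = f * u' ^ 2 := by rw [ha₂, hf]; ring
  have ha₀' : a₀ = f * c' ^ 2 := by
    have : u' * a₀ = u' * (f * c' ^ 2) := by rw [← key, hf]; ring
    exact mul_left_cancel₀ hu'ne this
  have ha₁' : a₁ = 2 * (f * u' * c') := by rw [hc, hcd, hf]; ring
  have hfne : f ≠ 0 := by
    intro h0; apply h₂; rw [ha₂', h0, zero_mul]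
  rcases lt_or_gt_of_ne hu'ne with hneg | hpos
  · exact ⟨f, -u', -c', hfne, by linarith, by rw [ha₂']; ring, by rw [ha₁']; ring,
      by rw [ha₀']; ring⟩
  · exact ⟨f, u', c', hfne, hpos, ha₂', ha₁', ha₀'⟩

lemma stmt15_exists_large {x : ℝ} {ψ : ℝ → ℝ}
    (hA : {a : ℤ × ℤ × ℤ | a.2.2 ≠ 0 ∧ a.2.1 ^ 2 - 4 * a.2.2 * a.1 = 0 ∧
          |(a.2.2 : ℝ) * x ^ 2 + (a.2.1 : ℝ) * x + (a.1 : ℝ)| <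
            ψ ((max |a.2.1| |a.2.2| : ℤ) : ℝ)}.Infinite) (N : ℤ) :
    ∃ a : ℤ × ℤ × ℤ, (a.2.2 ≠ 0 ∧ a.2.1 ^ 2 - 4 * a.2.2 * a.1 = 0 ∧
          |(a.2.2 : ℝ) * x ^ 2 + (a.2.1 : ℝ) * x + (a.1 : ℝ)| <
            ψ ((max |a.2.1| |a.2.2| : ℤ) : ℝ)) ∧ N ≤ max |a.2.1| |a.2.2| := by
  by_contra hcon
  push_neg at hcon
  set A := {a : ℤ × ℤ × ℤ | a.2.2 ≠ 0 ∧ a.2.1 ^ 2 - 4 * a.2.2 * a.1 = 0 ∧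
          |(a.2.2 : ℝ) * x ^ 2 + (a.2.1 : ℝ) * x + (a.1 : ℝ)| <
            ψ ((max |a.2.1| |a.2.2| : ℤ) : ℝ)} with hAdef
  have hBfin : A.Finite := by
    have hinj : Set.InjOn (fun a : ℤ × ℤ × ℤ => (a.2.1, a.2.2)) A := by
      rintro ⟨p₀, p₁, p₂⟩ hp ⟨q₀, q₁, q₂⟩ hq hpq
      simp only [Prod.mk.injEq] at hpq
      obtain ⟨h1, h2⟩ := hpq
      subst h1
      subst h2
      have hp' := hp.2.1
      have hq' := hq.2.1
      have hne := hq.1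
      simp only at hp' hq' hne ⊢
      have h5 : (4 * p₂) * p₀ = (4 * p₂) * q₀ := by linarith
      have h4 : (4 : ℤ) * p₂ ≠ 0 := by simp [hne]
      have := mul_left_cancel₀ h4 h5
      simp [this]
    have himg : (fun a : ℤ × ℤ × ℤ => (a.2.1, a.2.2)) '' A ⊆
        Set.Icc (-N) N ×ˢ Set.Icc (-N) N := by
      rintro p ⟨a, ha, rfl⟩
      have hmax := hcon a ha
      have h1 : |a.2.1| < N := lt_of_le_of_lt (le_max_left _ _) hmax
      have h2 : |a.2.2| < N := lt_of_le_of_lt (le_max_right _ _) hmax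
      rw [abs_lt] at h1 h2
      exact ⟨⟨h1.1.le, h1.2.le⟩, h2.1.le, h2.2.le⟩
    exact Set.Finite.of_finite_image
      (((Set.finite_Icc (-N) N).prod (Set.finite_Icc (-N) N)).subset himg) hinj
  exact hA hBfin

lemma stmt15_tail {b : ℕ → ℝ} (hb0 : ∀ q, 1 ≤ q → 0 ≤ b q)
    (hmono : ∀ q q', 1 ≤ q → q ≤ q' → b q' ≤ b q)
    (hsum : Summable (fun q : ℕ => b q * (q : ℝ) ^ 2)) :
    ∀ ε : ℝ, 0 < ε → ∃ Q : ℕ, 1 ≤ Q ∧ ∀ t : ℕ, Q ≤ t → b t * (t : ℝ) ^ 3 ≤ ε := by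
  intro ε hε
  set a := fun q : ℕ => b q * (q : ℝ) ^ 2 with hadef
  have ha0 : ∀ q, 0 ≤ a q := by
    intro q
    rcases Nat.eq_zero_or_pos q with h | h
    · simp [hadef, h]
    · exact mul_nonneg (hb0 q h) (by positivity)
  -- choose M with tsum - partial sum < ε/16
  have htendsto := hsum.hasSum.tendsto_sum_nat
  have : ∀ᶠ M in Filter.atTop, ∑' q, a q - ε / 16 < ∑ q ∈ Finset.range M, a q := by
    apply htendsto.eventually_const_lt
    linarith
  obtain ⟨M, hM⟩ := this.exists
  refine ⟨2 * M + 2, by omega, fun t ht => ?_⟩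
  have htM : M ≤ t / 2 := by omega
  have ht2 : 2 ≤ t := by omega
  set s := Finset.Ioc (t / 2) t with hsdef
  have hdisj : Disjoint (Finset.range M) s := by
    rw [Finset.disjoint_left]
    intro q hq hq'
    simp only [Finset.mem_range] at hq
    simp only [hsdef, Finset.mem_Ioc] at hq'
    omega
  have hsum_le : ∑ q ∈ Finset.range M, a q + ∑ q ∈ s, a q ≤ ∑' q, a q := by
    rw [← Finset.sum_union hdisj]
    exact Summable.sum_le_tsum _ (fun q _ => ha0 q) hsum
  have htail : ∑ q ∈ s, a q ≤ ε / 16 := by linarith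
  -- lower bound for the block sum
  have hblock : b t * (t : ℝ) ^ 3 / 16 ≤ ∑ q ∈ s, a q := by
    have hcard : (t : ℝ) / 4 ≤ (s.card : ℝ) := by
      have : s.card = t - t / 2 := Nat.card_Ioc _ _
      rw [this]
      have h1 : t / 2 * 2 ≤ t := Nat.div_mul_le_self t 2
      have h2 : (4 : ℝ) * ((t : ℝ) / 4) = t := by ring
      have h3 : t ≤ 4 * (t - t / 2) := by omega
      have h4 := (Nat.cast_le (α := ℝ)).2 h3
      push_cast at h4 ⊢
      linarith
    have hterm : ∀ q ∈ s, b t * (t : ℝ) ^ 2 / 4 ≤ a q := by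
      intro q hq
      simp only [hsdef, Finset.mem_Ioc] at hq
      have hq1 : 1 ≤ q := by omega
      have hbq : b t ≤ b q := hmono q t hq1 hq.2
      have hqr : (t : ℝ) / 2 ≤ (q : ℝ) := by
        have : t ≤ 2 * q := by omega
        have h5 := (Nat.cast_le (α := ℝ)).2 this
        push_cast at h5
        linarith
      have hq2 : (t : ℝ) ^ 2 / 4 ≤ (q : ℝ) ^ 2 := by nlinarith [Nat.cast_nonneg (α := ℝ) t]
      calc b t * (t : ℝ) ^ 2 / 4 ≤ b t * (q : ℝ) ^ 2 := by nlinarith [hb0 t (by omega)]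
        _ ≤ b q * (q : ℝ) ^ 2 := by nlinarith [Nat.cast_nonneg (α := ℝ) q]
    calc b t * (t : ℝ) ^ 3 / 16 = ((t : ℝ) / 4) * (b t * (t : ℝ) ^ 2 / 4) := by ring
      _ ≤ (s.card : ℝ) * (b t * (t : ℝ) ^ 2 / 4) := by
          apply mul_le_mul_of_nonneg_right hcard
          have := hb0 t (by omega)
          positivity
      _ = ∑ _q ∈ s, (b t * (t : ℝ) ^ 2 / 4) := by
          rw [Finset.sum_const, nsmul_eq_mul]
      _ ≤ ∑ q ∈ s, a q := Finset.sum_le_sum hterm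
  linarith

lemma stmt15_chain (g : ℝ → ℝ) (s₁ s₂ x₀ : ℝ) (hs₁ : 0 < s₁) (hs₂ : 0 < s₂) (hs₂1 : s₂ ≤ 1)
    (hbnd : ∀ x : ℝ, 0 < x → x < x₀ → x ^ s₁ < g x ∧ g x < x ^ s₂)
    (y : ℝ) (hy : 0 < y) (hyx : y < x₀) (hyx2 : 2 * Real.sqrt y < x₀) :
    g (2 * Real.sqrt y) ≤ 2 * (g y) ^ (s₂ / (2 * s₁)) := by
  have hsy : 0 < Real.sqrt y := Real.sqrt_pos.2 hy
  have h1 : g (2 * Real.sqrt y) < (2 * Real.sqrt y) ^ s₂ := (hbnd _ (by positivity) hyx2).2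
  have h2 : (2 * Real.sqrt y) ^ s₂ = 2 ^ s₂ * Real.sqrt y ^ s₂ :=
    Real.mul_rpow (by norm_num) hsy.le
  have h3 : (2 : ℝ) ^ s₂ ≤ 2 := by
    calc (2 : ℝ) ^ s₂ ≤ 2 ^ (1 : ℝ) :=
          Real.rpow_le_rpow_of_exponent_le one_le_two hs₂1
      _ = 2 := Real.rpow_one 2
  have h4 : Real.sqrt y ^ s₂ = y ^ (s₂ / 2) := by
    rw [Real.sqrt_eq_rpow, ← Real.rpow_mul hy.le]
    congr 1
    ring
  have h5 : y ^ (s₂ / 2) = (y ^ s₁) ^ (s₂ / (2 * s₁)) := by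
    rw [← Real.rpow_mul hy.le]
    congr 1
    field_simp
  have h6 : (y ^ s₁) ^ (s₂ / (2 * s₁)) ≤ g y ^ (s₂ / (2 * s₁)) :=
    Real.rpow_le_rpow (by positivity) (hbnd y hy hyx).1.le (by positivity)
  have h7 : (0:ℝ) ≤ Real.sqrt y ^ s₂ := by positivity
  nlinarith [h1, h2, h3, h4, h5, h6, h7]

def s15H (w : ℤ × ℤ × ℤ) : ℤ := max |2 * w.1 * w.2.1 * w.2.2| |w.1 * w.2.1 ^ 2|

def s15t (w : ℤ × ℤ × ℤ) : ℤ := |w.1| * w.2.1 ^ 2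

noncomputable def s15rad (ψ : ℝ → ℝ) (w : ℤ × ℤ × ℤ) : ℝ :=
  Real.sqrt (ψ (s15H w) / (s15t w))

noncomputable def s15E (ψ : ℝ → ℝ) (w : ℤ × ℤ × ℤ) : Set ℝ :=
  Set.Icc (-(w.2.2 : ℝ) / w.2.1 - s15rad ψ w) (-(w.2.2 : ℝ) / w.2.1 + s15rad ψ w)

def s15J (R N : ℕ) : Set (ℤ × ℤ × ℤ) :=
  {w | w.1 ≠ 0 ∧ 0 < w.2.1 ∧ |w.2.2| ≤ w.2.1 + R ∧ (N : ℤ) ≤ s15H w}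

lemma s15t_pos {w : ℤ × ℤ × ℤ} (hk : w.1 ≠ 0) (hu : 0 < w.2.1) : 1 ≤ s15t w := by
  have h0 : 0 < |w.1| := abs_pos.mpr hk
  have h1 : 1 ≤ |w.1| := by omega
  have h2 : 1 ≤ w.2.1 ^ 2 := by nlinarith
  calc (1:ℤ) = 1 * 1 := by ring
    _ ≤ |w.1| * w.2.1 ^ 2 := by exact mul_le_mul h1 h2 one_pos.le (by positivity)

lemma s15t_le_H (w : ℤ × ℤ × ℤ) : s15t w ≤ s15H w := by
  have : s15t w = |w.1 * w.2.1 ^ 2| := by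
    rw [abs_mul, abs_pow, sq_abs]
    rfl
  rw [this]
  exact le_max_right _ _

lemma s15H_le {R N : ℕ} {w : ℤ × ℤ × ℤ} (hw : w ∈ s15J R N) :
    s15H w ≤ 2 * (1 + R) ^ 2 * s15t w := by
  obtain ⟨hk, hu, hv, -⟩ := hw
  have h0 : 0 < |w.1| := abs_pos.mpr hk
  have h1 : 1 ≤ |w.1| := by omega
  have hu1 : 1 ≤ w.2.1 := hu
  have hR : (0:ℤ) ≤ (R:ℤ) := by positivity
  have hb1 : |2 * w.1 * w.2.1 * w.2.2| = 2 * |w.1| * w.2.1 * |w.2.2| := by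
    rw [abs_mul, abs_mul, abs_mul]
    rw [abs_of_pos hu]
    norm_num
  have hb2 : |w.1 * w.2.1 ^ 2| = |w.1| * w.2.1 ^ 2 := by
    rw [abs_mul, abs_pow, sq_abs]
  have key1 : 2 * |w.1| * w.2.1 * |w.2.2| ≤ 2 * (1 + R) ^ 2 * (|w.1| * w.2.1 ^ 2) := by
    have hvu : |w.2.2| ≤ (1 + (R:ℤ)) * w.2.1 := by nlinarith
    have e1 : 2 * |w.1| * w.2.1 * |w.2.2| ≤ 2 * |w.1| * w.2.1 * ((1 + (R:ℤ)) * w.2.1) :=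
      mul_le_mul_of_nonneg_left hvu (by positivity)
    have e2 : (1:ℤ) + R ≤ (1 + R) ^ 2 := by nlinarith
    have e3 : (1 + (R:ℤ)) * (2 * (|w.1| * w.2.1 ^ 2)) ≤
        ((1 + (R:ℤ)) ^ 2) * (2 * (|w.1| * w.2.1 ^ 2)) :=
      mul_le_mul_of_nonneg_right e2 (by positivity)
    calc 2 * |w.1| * w.2.1 * |w.2.2| ≤ 2 * |w.1| * w.2.1 * ((1 + (R:ℤ)) * w.2.1) := e1
      _ = (1 + (R:ℤ)) * (2 * (|w.1| * w.2.1 ^ 2)) := by ring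
      _ ≤ ((1 + (R:ℤ)) ^ 2) * (2 * (|w.1| * w.2.1 ^ 2)) := e3
      _ = 2 * (1 + R) ^ 2 * (|w.1| * w.2.1 ^ 2) := by push_cast; ring
  have key2 : |w.1| * w.2.1 ^ 2 ≤ 2 * (1 + R) ^ 2 * (|w.1| * w.2.1 ^ 2) := by
    refine le_mul_of_one_le_left (by positivity) ?_
    nlinarith [hR]
  unfold s15H s15t
  rw [max_le_iff, hb1, hb2]
  exact ⟨key1, key2⟩

lemma s15_cover (ψ : ℝ → ℝ) (hψ_pos : ∀ x : ℝ, 0 < x → 0 < ψ x)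
    (hψ_dec : ∀ x y : ℝ, 0 < x → x ≤ y → ψ y ≤ ψ x)
    (R N : ℕ) (hR : Real.sqrt (ψ 1) ≤ R) (x : ℝ) (hx : x ∈ Set.Icc (0:ℝ) 1)
    (hinf : {a : ℤ × ℤ × ℤ | a.2.2 ≠ 0 ∧ a.2.1 ^ 2 - 4 * a.2.2 * a.1 = 0 ∧
          |(a.2.2 : ℝ) * x ^ 2 + (a.2.1 : ℝ) * x + (a.1 : ℝ)| <
            ψ ((max |a.2.1| |a.2.2| : ℤ) : ℝ)}.Infinite) :
    ∃ w ∈ s15J R N, x ∈ s15E ψ w := by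
  obtain ⟨a, ⟨hane, hadisc, halt⟩, haN⟩ := stmt15_exists_large hinf (N : ℤ)
  obtain ⟨k, u, v, hk, hu, ha2, ha1, ha0⟩ := stmt15_param a.1 a.2.1 a.2.2 hane hadisc
  set w : ℤ × ℤ × ℤ := (k, u, v) with hw
  have HH : s15H w = max |a.2.1| |a.2.2| := by
    unfold s15H
    rw [show (2 : ℤ) * w.1 * w.2.1 * w.2.2 = 2 * (k * u * v) by rw [hw]; ring,
      show w.1 * w.2.1 ^ 2 = k * u ^ 2 from rfl, ← ha1, ← ha2]
  have ht1 : 1 ≤ s15t w := s15t_pos hk hu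
  have htH : s15t w ≤ s15H w := s15t_le_H w
  have hH1 : (1:ℤ) ≤ s15H w := le_trans ht1 htH
  have hψH : ψ ((s15H w : ℤ) : ℝ) ≤ ψ 1 :=
    hψ_dec 1 _ one_pos (by exact_mod_cast hH1)
  have hψHpos : 0 < ψ ((s15H w : ℤ) : ℝ) := by
    apply hψ_pos
    have : (1:ℝ) ≤ ((s15H w : ℤ) : ℝ) := by exact_mod_cast hH1
    linarith
  have hu0 : (0:ℝ) < (u:ℝ) := by exact_mod_cast hu
  have hk0 : (0:ℝ) < ((|k| : ℤ) : ℝ) := by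
    have : 0 < |k| := abs_pos.mpr hk
    exact_mod_cast this
  -- rewrite the polynomial
  have hpoly : (a.2.2 : ℝ) * x ^ 2 + (a.2.1 : ℝ) * x + (a.1 : ℝ)
      = (k : ℝ) * ((u : ℝ) * x + (v : ℝ)) ^ 2 := by
    rw [ha2, ha1, ha0]
    push_cast
    ring
  have hlt2 : |(k : ℝ) * ((u : ℝ) * x + (v : ℝ)) ^ 2| < ψ ((s15H w : ℤ) : ℝ) := by
    rw [← hpoly, HH]
    exact halt
  have hlt3 : ((|k| : ℤ) : ℝ) * ((u : ℝ) * x + (v : ℝ)) ^ 2 < ψ ((s15H w : ℤ) : ℝ) := by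
    rw [abs_mul, abs_of_nonneg (sq_nonneg ((u : ℝ) * x + (v : ℝ)))] at hlt2
    rw [Int.cast_abs]
    exact hlt2
  have hsq : ((u : ℝ) * x + (v : ℝ)) ^ 2 < ψ ((s15H w : ℤ) : ℝ) / ((|k| : ℤ) : ℝ) := by
    rw [lt_div_iff₀ hk0]
    linarith
  -- bound on |v|
  have hvbound : |v| ≤ u + (R : ℤ) := by
    have h10 : ((u : ℝ) * x + (v : ℝ)) ^ 2 < ψ ((s15H w : ℤ) : ℝ) := by
      have hk1 : (1:ℝ) ≤ ((|k| : ℤ) : ℝ) := by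
        have : 1 ≤ |k| := by
          have := abs_pos.mpr hk
          omega
        exact_mod_cast this
      nlinarith [sq_nonneg ((u : ℝ) * x + (v : ℝ))]
    have h11 : |(u : ℝ) * x + (v : ℝ)| ≤ (R : ℝ) := by
      have := Real.sqrt_le_sqrt h10.le
      rw [Real.sqrt_sq_eq_abs] at this
      have h12 : Real.sqrt (ψ ((s15H w : ℤ) : ℝ)) ≤ Real.sqrt (ψ 1) :=
        Real.sqrt_le_sqrt hψH
      linarith
    have h13 : |(v : ℝ)| ≤ (u : ℝ) + (R : ℝ) := by
      have e2 := abs_sub ((u : ℝ) * x + (v : ℝ)) ((u : ℝ) * x)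
      rw [add_sub_cancel_left] at e2
      have e3 : |(u : ℝ) * x| ≤ (u : ℝ) := by
        rw [abs_of_nonneg (by nlinarith [hx.1] : (0:ℝ) ≤ (u : ℝ) * x)]
        nlinarith [hx.2]
      linarith
    exact_mod_cast (by push_cast; exact h13 : ((|v| : ℤ) : ℝ) ≤ ((u + (R:ℤ) : ℤ) : ℝ))
  -- membership in the interval
  have hcast : ((s15t w : ℤ) : ℝ) = ((|k| : ℤ) : ℝ) * (u : ℝ) ^ 2 := by
    unfold s15t
    push_cast
    rfl
  have hxE : x ∈ s15E ψ w := by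
    have h8 : (x + (v : ℝ) / (u : ℝ)) ^ 2
        < ψ ((s15H w : ℤ) : ℝ) / (((|k| : ℤ) : ℝ) * (u : ℝ) ^ 2) := by
      have e1 : x + (v : ℝ) / (u : ℝ) = ((u : ℝ) * x + (v : ℝ)) / (u : ℝ) := by
        field_simp
      rw [e1, div_pow]
      rw [div_lt_div_iff₀ (by positivity) (by positivity)]
      calc ((u : ℝ) * x + (v : ℝ)) ^ 2 * (((|k| : ℤ) : ℝ) * (u : ℝ) ^ 2)
          = (((u : ℝ) * x + (v : ℝ)) ^ 2 * ((|k| : ℤ) : ℝ)) * (u : ℝ) ^ 2 := by ring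
        _ < ψ ((s15H w : ℤ) : ℝ) * (u : ℝ) ^ 2 := by
            apply mul_lt_mul_of_pos_right _ (by positivity)
            rw [← lt_div_iff₀ hk0]
            exact hsq
    have h9 : |x + (v : ℝ) / (u : ℝ)| ≤ s15rad ψ w := by
      have := Real.sqrt_le_sqrt h8.le
      rw [Real.sqrt_sq_eq_abs] at this
      unfold s15rad
      rw [hcast]
      exact this
    rw [abs_le] at h9
    unfold s15E
    constructor
    · have : -((v : ℝ)) / (u : ℝ) = -((v : ℝ) / (u : ℝ)) := by ring
      rw [this]
      linarith [h9.1]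
    · have : -((v : ℝ)) / (u : ℝ) = -((v : ℝ) / (u : ℝ)) := by ring
      rw [this]
      linarith [h9.2]
  exact ⟨w, ⟨hk, hu, hvbound, HH ▸ haN⟩, hxE⟩
open scoped ENNReal


lemma s15_sum (R N : ℕ) (p c : ℝ) (hp : 1 < p) (hc : 0 ≤ c)
    (J : Set (ℤ × ℤ × ℤ))
    (hJ : ∀ w ∈ J, 0 < w.2.1 ∧ |w.2.2| ≤ w.2.1 + R)
    (F : ℤ × ℤ × ℤ → ℝ≥0∞)
    (hF : ∀ w ∈ J, F w ≤ ENNReal.ofReal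
      (c * ((w.1.natAbs : ℝ) * (w.2.1.toNat : ℝ) ^ 2) ^ (-p))) :
    ∑' (i : J), F i ≤ ENNReal.ofReal
      (c * (((∑' n : ℕ, (n : ℝ) ^ (-p)) + ∑' n : ℕ, ((n : ℝ) + 1) ^ (-p)) *
        ((2 * R + 3) * ∑' n : ℕ, (n : ℝ) ^ (1 - 2 * p)))) := by
  classical
  -- summability of the real series
  have hSa : Summable (fun n : ℕ => (n : ℝ) ^ (-p)) := by
    have := Real.summable_nat_rpow_inv.2 hp
    refine this.congr fun n => ?_
    rw [← Real.rpow_neg (by positivity : (0:ℝ) ≤ (n:ℝ))]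
  have hSb : Summable (fun n : ℕ => ((n : ℝ) + 1) ^ (-p)) := by
    have := (summable_nat_add_iff 1).2 hSa
    refine this.congr fun n => ?_
    push_cast
    ring_nf
  have hSc : Summable (fun n : ℕ => (n : ℝ) ^ (1 - 2 * p)) := by
    have h2p : 1 < 2 * p - 1 := by linarith
    have := Real.summable_nat_rpow_inv.2 h2p
    refine this.congr fun n => ?_
    rw [← Real.rpow_neg (by positivity : (0:ℝ) ≤ (n:ℝ))]
    congr 1
    ring
  have ha0 : ∀ n : ℕ, (0:ℝ) ≤ (n : ℝ) ^ (-p) := fun n => Real.rpow_nonneg (by positivity) _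
  have hb0 : ∀ n : ℕ, (0:ℝ) ≤ ((n : ℝ) + 1) ^ (-p) := fun n => Real.rpow_nonneg (by positivity) _
  have hc0 : ∀ n : ℕ, (0:ℝ) ≤ (n : ℝ) ^ (1 - 2*p) := fun n => Real.rpow_nonneg (by positivity) _
  set Sva : ℝ := ∑' n : ℕ, (n : ℝ) ^ (-p) with hSva
  set Svb : ℝ := ∑' n : ℕ, ((n : ℝ) + 1) ^ (-p) with hSvb
  set Svc : ℝ := ∑' n : ℕ, (n : ℝ) ^ (1 - 2 * p) with hSvc
  have hSva0 : 0 ≤ Sva := tsum_nonneg ha0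
  have hSvb0 : 0 ≤ Svb := tsum_nonneg hb0
  have hSvc0 : 0 ≤ Svc := tsum_nonneg hc0
  -- the majorant
  set f : ℤ × ℤ × ℤ → ℝ≥0∞ := fun w =>
    if 0 < w.2.1 ∧ |w.2.2| ≤ w.2.1 + (R:ℤ) then
      ENNReal.ofReal c * ENNReal.ofReal ((w.1.natAbs : ℝ) ^ (-p)) *
        ENNReal.ofReal ((w.2.1.toNat : ℝ) ^ (-(2 * p)))
    else 0 with hfdef
  have step2 : ∑' (i : J), F i ≤ ∑' w, f w := by
    rw [tsum_subtype]
    apply ENNReal.tsum_le_tsum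
    intro w
    by_cases hw : w ∈ J
    · rw [Set.indicator_of_mem hw]
      refine (hF w hw).trans ?_
      have h1 : ((w.1.natAbs : ℝ) * (w.2.1.toNat : ℝ) ^ 2) ^ (-p)
          = (w.1.natAbs : ℝ) ^ (-p) * (w.2.1.toNat : ℝ) ^ (-(2*p)) := by
        rw [Real.mul_rpow (by positivity) (by positivity)]
        congr 1
        rw [← Real.rpow_natCast (w.2.1.toNat : ℝ) 2, ← Real.rpow_mul (by positivity)]
        norm_num
      rw [hfdef]
      simp only
      rw [if_pos ⟨(hJ w hw).1, (hJ w hw).2⟩]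
      rw [h1, ENNReal.ofReal_mul hc, ENNReal.ofReal_mul (by positivity)]
      exact le_of_eq (mul_assoc _ _ _).symm
    · rw [Set.indicator_of_notMem hw]
      exact zero_le
  -- Fubini
  have step3 : ∑' w, f w = ∑' k : ℤ, ∑' u : ℤ, ∑' v : ℤ, f (k, u, v) := by
    rw [ENNReal.tsum_prod']
    congr 1
    funext k
    rw [ENNReal.tsum_prod']
  -- inner v-sum
  have step4 : ∀ k u : ℤ, (∑' v : ℤ, f (k, u, v)) ≤
      ((2 * R + 3 : ℕ) : ℝ≥0∞) * ENNReal.ofReal c *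
        ENNReal.ofReal ((k.natAbs : ℝ) ^ (-p)) *
        ENNReal.ofReal ((u.toNat : ℝ) ^ (1 - 2 * p)) := by
    intro k u
    by_cases h0 : 0 < u
    · set C₀ : ℝ≥0∞ := ENNReal.ofReal c * ENNReal.ofReal ((k.natAbs : ℝ) ^ (-p)) *
        ENNReal.ofReal ((u.toNat : ℝ) ^ (-(2 * p))) with hC₀
      have hfv : ∀ v : ℤ, f (k, u, v) = if |v| ≤ u + (R:ℤ) then C₀ else 0 := by
        intro v
        rw [hfdef]
        simp only [h0, true_and, hC₀]
      have hout : ∀ v : ℤ, v ∉ Finset.Icc (-(u + (R:ℤ))) (u + (R:ℤ)) → f (k, u, v) = 0 := by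
        intro v hv
        rw [hfv v, if_neg]
        intro habs
        exact hv (Finset.mem_Icc.2 (abs_le.1 habs))
      rw [tsum_eq_sum hout]
      have hcard : (Finset.Icc (-(u + (R:ℤ))) (u + (R:ℤ))).card ≤ (2 * R + 3) * u.toNat := by
        rw [Int.card_Icc]
        obtain ⟨m, rfl⟩ : ∃ m : ℕ, u = (m : ℤ) := ⟨u.toNat, (Int.toNat_of_nonneg h0.le).symm⟩
        have hm : 0 < m := by exact_mod_cast h0
        have : ((m:ℤ) + R + 1 - -((m:ℤ) + R)) = (2*m + 2*R + 1 : ℕ) := by push_cast; ring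
        rw [this, Int.toNat_natCast, Int.toNat_natCast]
        nlinarith
      calc ∑ v ∈ Finset.Icc (-(u + (R:ℤ))) (u + (R:ℤ)), f (k, u, v)
          ≤ ∑ _v ∈ Finset.Icc (-(u + (R:ℤ))) (u + (R:ℤ)), C₀ := by
            apply Finset.sum_le_sum
            intro v _
            rw [hfv v]
            split <;> simp
        _ = ((Finset.Icc (-(u + (R:ℤ))) (u + (R:ℤ))).card : ℝ≥0∞) * C₀ := by
            rw [Finset.sum_const, nsmul_eq_mul]
        _ ≤ (((2 * R + 3) * u.toNat : ℕ) : ℝ≥0∞) * C₀ := by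
            apply mul_le_mul_left
            exact_mod_cast hcard
        _ = ((2 * R + 3 : ℕ) : ℝ≥0∞) * ENNReal.ofReal c *
              ENNReal.ofReal ((k.natAbs : ℝ) ^ (-p)) *
              ENNReal.ofReal ((u.toNat : ℝ) ^ (1 - 2 * p)) := by
            have hu1 : (0:ℝ) < (u.toNat : ℝ) := by
              have : 0 < u.toNat := by omega
              exact_mod_cast this
            have e1 : ((u.toNat : ℕ) : ℝ≥0∞) = ENNReal.ofReal (u.toNat : ℝ) := by
              rw [ENNReal.ofReal_natCast]
            have e2 : ENNReal.ofReal (u.toNat : ℝ) *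
                ENNReal.ofReal ((u.toNat : ℝ) ^ (-(2 * p)))
                = ENNReal.ofReal ((u.toNat : ℝ) ^ (1 - 2 * p)) := by
              rw [← ENNReal.ofReal_mul hu1.le]
              congr 1
              nth_rewrite 1 [← Real.rpow_one (u.toNat : ℝ)]
              rw [← Real.rpow_add hu1, show (1:ℝ) + -(2 * p) = 1 - 2 * p by ring]
            have e3 : (((2 * R + 3) * u.toNat : ℕ) : ℝ≥0∞)
                = ((2 * R + 3 : ℕ) : ℝ≥0∞) * ((u.toNat : ℕ) : ℝ≥0∞) := by
              push_cast
              ring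
            rw [e3, hC₀, e1, ← e2]
            ring
    · have hfv : ∀ v : ℤ, f (k, u, v) = 0 := by
        intro v
        rw [hfdef]
        simp only
        rw [if_neg]
        intro hcon
        exact h0 hcon.1
      simp only [hfv, tsum_zero]
      exact zero_le
  -- u-sum
  have stepu : (∑' u : ℤ, ENNReal.ofReal ((u.toNat : ℝ) ^ (1 - 2 * p)))
      = ENNReal.ofReal Svc := by
    have hinj : Function.Injective (fun n : ℕ => (n : ℤ)) := fun a b h => by simpa using h
    have hsupp : Function.support (fun u : ℤ => ENNReal.ofReal ((u.toNat : ℝ) ^ (1 - 2 * p)))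
        ⊆ Set.range (fun n : ℕ => (n : ℤ)) := by
      intro u hu
      rcases le_or_gt 0 u with h | h
      · exact ⟨u.toNat, (Int.toNat_of_nonneg h)⟩
      · exfalso
        apply hu
        show ENNReal.ofReal ((u.toNat : ℝ) ^ (1 - 2 * p)) = 0
        have h0' : u.toNat = 0 := by omega
        rw [h0', Nat.cast_zero, Real.zero_rpow (by linarith)]
        simp
    rw [← Function.Injective.tsum_eq hinj hsupp]
    simp only [Int.toNat_natCast]
    rw [← ENNReal.ofReal_tsum_of_nonneg hc0 hSc]
  -- k-sum
  have stepk : (∑' k : ℤ, ENNReal.ofReal ((k.natAbs : ℝ) ^ (-p)))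
      = ENNReal.ofReal Sva + ENNReal.ofReal Svb := by
    have h1 : HasSum (fun n : ℕ => ENNReal.ofReal (((Int.ofNat n).natAbs : ℝ) ^ (-p)))
        (ENNReal.ofReal Sva) := by
      have := (ENNReal.summable (f := fun n : ℕ => ENNReal.ofReal ((n : ℝ) ^ (-p)))).hasSum
      rw [← ENNReal.ofReal_tsum_of_nonneg ha0 hSa] at this
      simpa using this
    have h2 : HasSum (fun n : ℕ => ENNReal.ofReal (((Int.negSucc n).natAbs : ℝ) ^ (-p)))
        (ENNReal.ofReal Svb) := by
      have := (ENNReal.summable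
        (f := fun n : ℕ => ENNReal.ofReal (((n : ℝ) + 1) ^ (-p)))).hasSum
      rw [← ENNReal.ofReal_tsum_of_nonneg hb0 hSb] at this
      have he : (fun n : ℕ => ENNReal.ofReal (((Int.negSucc n).natAbs : ℝ) ^ (-p)))
          = fun n : ℕ => ENNReal.ofReal (((n : ℝ) + 1) ^ (-p)) := by
        funext n
        have hna : ((Int.negSucc n).natAbs : ℝ) = (n : ℝ) + 1 := by
          rw [show (Int.negSucc n).natAbs = n + 1 from rfl]
          push_cast
          ring
        rw [hna]
      rw [he]
      exact this
    have h3 := h1.int_rec h2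
    have he : (fun k : ℤ => Int.rec
        (fun n : ℕ => ENNReal.ofReal (((Int.ofNat n).natAbs : ℝ) ^ (-p)))
        (fun n : ℕ => ENNReal.ofReal (((Int.negSucc n).natAbs : ℝ) ^ (-p))) k)
        = fun k : ℤ => ENNReal.ofReal ((k.natAbs : ℝ) ^ (-p)) := by
      funext k
      rcases k with n | n <;> rfl
    rw [he] at h3
    exact h3.tsum_eq
  -- assemble
  calc ∑' (i : J), F i ≤ ∑' w, f w := step2
    _ = ∑' k : ℤ, ∑' u : ℤ, ∑' v : ℤ, f (k, u, v) := step3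
    _ ≤ ∑' k : ℤ, ∑' u : ℤ, ((2 * R + 3 : ℕ) : ℝ≥0∞) * ENNReal.ofReal c *
        ENNReal.ofReal ((k.natAbs : ℝ) ^ (-p)) *
        ENNReal.ofReal ((u.toNat : ℝ) ^ (1 - 2 * p)) := by
        apply ENNReal.tsum_le_tsum
        intro k
        apply ENNReal.tsum_le_tsum
        intro u
        exact step4 k u
    _ = ∑' k : ℤ, ((2 * R + 3 : ℕ) : ℝ≥0∞) * ENNReal.ofReal c *
        ENNReal.ofReal ((k.natAbs : ℝ) ^ (-p)) * ENNReal.ofReal Svc := by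
        congr 1
        funext k
        rw [ENNReal.tsum_mul_left, stepu]
    _ = ∑' k : ℤ, ((2 * R + 3 : ℕ) : ℝ≥0∞) * ENNReal.ofReal c * ENNReal.ofReal Svc *
        ENNReal.ofReal ((k.natAbs : ℝ) ^ (-p)) := by
        congr 1
        funext k
        ring
    _ = ((2 * R + 3 : ℕ) : ℝ≥0∞) * ENNReal.ofReal c * ENNReal.ofReal Svc *
        (ENNReal.ofReal Sva + ENNReal.ofReal Svb) := by
        rw [ENNReal.tsum_mul_left, stepk]
    _ = ENNReal.ofReal (c * ((Sva + Svb) * ((2 * R + 3) * Svc))) := by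
        rw [ENNReal.ofReal_mul hc, ENNReal.ofReal_mul (by positivity),
          ENNReal.ofReal_add hSva0 hSvb0, ENNReal.ofReal_mul (by positivity)]
        have hcoe : ((2 * R + 3 : ℕ) : ℝ≥0∞) = ENNReal.ofReal ((2 * R + 3 : ℕ) : ℝ) := by
          rw [ENNReal.ofReal_natCast]
        rw [hcoe]
        push_cast
        ring
set_option maxHeartbeats 1000000 in
theorem stmt15 (g ψ : ℝ → ℝ) (s₁ s₂ : ℝ)
    (hs₁ : 0 < s₁) (hs₂ : 0 < s₂) (hs₂1 : s₂ ≤ 1) (hs : 2 * s₁ < 3 * s₂)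
    (hg_mono : ∀ x y : ℝ, 0 < x → x ≤ y → g x ≤ g y)
    (hg_cont : ContinuousOn g (Set.Ioi 0))
    (hg_pos : ∀ x : ℝ, 0 < x → 0 < g x)
    (hg_lim : Filter.Tendsto g (nhdsWithin 0 (Set.Ioi 0)) (nhds 0))
    (hg_bnd : ∃ x₀ > (0 : ℝ), ∀ x : ℝ, 0 < x → x < x₀ → x ^ s₁ < g x ∧ g x < x ^ s₂)
    (hg_div : Filter.Tendsto (fun q : ℝ => g q / q) (nhdsWithin 0 (Set.Ioi 0)) Filter.atTop)
    (hψ_pos : ∀ x : ℝ, 0 < x → 0 < ψ x)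
    (hψ_dec : ∀ x y : ℝ, 0 < x → x ≤ y → ψ y ≤ ψ x)
    (hsum : Summable (fun q : ℕ => g (ψ q / q) * (q : ℝ) ^ 2)) :
    Measure.mkMetric (fun r : ℝ≥0∞ => ENNReal.ofReal (g r.toReal))
      {x : ℝ | x ∈ Set.Icc (0 : ℝ) 1 ∧
        {a : ℤ × ℤ × ℤ | a.2.2 ≠ 0 ∧ a.2.1 ^ 2 - 4 * a.2.2 * a.1 = 0 ∧
          |(a.2.2 : ℝ) * x ^ 2 + (a.2.1 : ℝ) * x + (a.1 : ℝ)| <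
            ψ ((max |a.2.1| |a.2.2| : ℤ) : ℝ)}.Infinite} = 0 := by
  obtain ⟨x₀, hx₀, hbnd⟩ := hg_bnd
  set m : ℝ≥0∞ → ℝ≥0∞ := fun r => ENNReal.ofReal (g r.toReal) with hm
  set S := {x : ℝ | x ∈ Set.Icc (0 : ℝ) 1 ∧
        {a : ℤ × ℤ × ℤ | a.2.2 ≠ 0 ∧ a.2.1 ^ 2 - 4 * a.2.2 * a.1 = 0 ∧
          |(a.2.2 : ℝ) * x ^ 2 + (a.2.1 : ℝ) * x + (a.1 : ℝ)| <
            ψ ((max |a.2.1| |a.2.2| : ℤ) : ℝ)}.Infinite} with hS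
  -- basic constants
  have hC : 0 < ψ 1 := hψ_pos 1 one_pos
  set R : ℕ := ⌈Real.sqrt (ψ 1)⌉₊ with hRdef
  have hR : Real.sqrt (ψ 1) ≤ R := Nat.le_ceil _
  set c₀ : ℕ := 2 * (1 + R) ^ 2 with hc₀def
  have hc₀pos : 0 < c₀ := by positivity
  set τ : ℝ := s₂ / (2 * s₁) with hτdef
  have hτ : 0 < τ := by positivity
  set p : ℝ := 3 * τ with hpdef
  have hp : 1 < p := by
    rw [hpdef, hτdef, show 3 * (s₂ / (2 * s₁)) = (3 * s₂) / (2 * s₁) by ring]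
    exact (one_lt_div (by positivity)).2 (by linarith)
  -- the sequence b
  set b : ℕ → ℝ := fun q => g (ψ q / q) with hbdef
  have hψq_pos : ∀ q : ℕ, 1 ≤ q → 0 < ψ q / q := by
    intro q hq
    have hq0 : (0:ℝ) < (q:ℝ) := by exact_mod_cast hq
    exact div_pos (hψ_pos _ hq0) hq0
  have hψdiv : ∀ q q' : ℕ, 1 ≤ q → q ≤ q' → ψ q' / q' ≤ ψ q / q := by
    intro q q' hq hqq
    have hq0 : (0:ℝ) < (q:ℝ) := by exact_mod_cast hq
    have hqq' : (q:ℝ) ≤ (q':ℝ) := by exact_mod_cast hqq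
    have hq'0 : (0:ℝ) < (q':ℝ) := by linarith
    exact div_le_div₀ (le_of_lt (hψ_pos _ hq0)) (hψ_dec _ _ hq0 hqq') hq0 hqq'
  have hb0 : ∀ q : ℕ, 1 ≤ q → 0 ≤ b q := fun q hq => (hg_pos _ (hψq_pos q hq)).le
  have hbmono : ∀ q q' : ℕ, 1 ≤ q → q ≤ q' → b q' ≤ b q := by
    intro q q' hq hqq
    exact hg_mono _ _ (hψq_pos q' (le_trans hq hqq)) (hψdiv q q' hq hqq)
  have htail := stmt15_tail hb0 hbmono hsum
  -- eventual smallness of ψ q / q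
  have hsmall : ∀ x₁ : ℝ, 0 < x₁ → ∃ Q₁ : ℕ, 1 ≤ Q₁ ∧ ∀ t : ℕ, Q₁ ≤ t → ψ t / t < x₁ := by
    intro x₁ hx₁
    have hex : ∃ q : ℕ, 1 ≤ q ∧ ψ q / q < x₁ := by
      by_contra hcon
      push_neg at hcon
      have hge : ∀ q : ℕ, 1 ≤ q → g x₁ ≤ b q := by
        intro q hq
        exact hg_mono _ _ hx₁ (hcon q hq)
      have hlim := hsum.tendsto_atTop_zero
      have := hlim.eventually (gt_mem_nhds (hg_pos x₁ hx₁))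
      obtain ⟨q, hq, hlt⟩ := (this.and (Filter.eventually_ge_atTop 1)).exists
      have hq0 : (1:ℝ) ≤ (q:ℝ) := by exact_mod_cast hlt
      have h1 : g x₁ ≤ b q := hge q hlt
      have hq2 : (1:ℝ) ≤ (q:ℝ)^2 := by nlinarith [hq0]
      have h2 : b q ≤ b q * (q:ℝ)^2 := by nlinarith [hb0 q hlt, hq2]
      simp only [hbdef] at h2
      linarith [hq, h1, h2]
    obtain ⟨q₀, hq₀, hlt₀⟩ := hex
    exact ⟨q₀, hq₀, fun t ht => lt_of_le_of_lt (hψdiv q₀ t hq₀ ht) hlt₀⟩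
  -- the measure bound via coverings
  have hcover : ∀ N : ℕ, S ⊆ ⋃ i : s15J R N, s15E ψ i := by
    intro N x hx
    obtain ⟨w, hwJ, hxE⟩ := s15_cover ψ hψ_pos hψ_dec R N hR x hx.1 hx.2
    exact Set.mem_iUnion.2 ⟨⟨w, hwJ⟩, hxE⟩
  -- diameters
  have hdiam : ∀ N : ℕ, ∀ w ∈ s15J R N, EMetric.diam (s15E ψ w)
      = ENNReal.ofReal (2 * s15rad ψ w) := by
    intro N w hw
    rw [s15E, EMetric.diam, Real.ediam_Icc]
    congr 1
    ring
  have hrad_pos : ∀ N : ℕ, ∀ w ∈ s15J R N, 0 < s15rad ψ w := by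
    intro N w hw
    obtain ⟨hk, hu, -, -⟩ := hw
    have ht1 : 1 ≤ s15t w := s15t_pos hk hu
    have ht0 : (0:ℝ) < ((s15t w : ℤ) : ℝ) := by exact_mod_cast ht1
    have hH1 : (1:ℝ) ≤ ((s15H w : ℤ) : ℝ) := by
      exact_mod_cast le_trans ht1 (s15t_le_H w)
    exact Real.sqrt_pos.2 (div_pos (hψ_pos _ (by linarith)) ht0)
  have hrad_le : ∀ N : ℕ, 1 ≤ N → ∀ w ∈ s15J R N,
      s15rad ψ w ≤ Real.sqrt (ψ 1 * (c₀ : ℝ) / N) := by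
    intro N hN w hw
    apply Real.sqrt_le_sqrt
    obtain ⟨hk, hu, hv, hH⟩ := hw
    have ht1 : 1 ≤ s15t w := s15t_pos hk hu
    have ht0 : (0:ℝ) < ((s15t w : ℤ) : ℝ) := by exact_mod_cast ht1
    have hH1 : (1:ℝ) ≤ ((s15H w : ℤ) : ℝ) := by
      exact_mod_cast le_trans ht1 (s15t_le_H w)
    have hψH : ψ ((s15H w : ℤ) : ℝ) ≤ ψ 1 := hψ_dec 1 _ one_pos hH1
    have hψHpos : 0 < ψ ((s15H w : ℤ) : ℝ) := hψ_pos _ (by linarith)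
    have hNc : (N : ℝ) ≤ (c₀ : ℝ) * ((s15t w : ℤ) : ℝ) := by
      have h1 : (N : ℤ) ≤ (c₀ : ℤ) * s15t w := by
        have h2 := s15H_le (⟨hk, hu, hv, hH⟩ : w ∈ s15J R N)
        calc (N:ℤ) ≤ s15H w := hH
          _ ≤ 2 * (1 + (R:ℤ)) ^ 2 * s15t w := h2
          _ = (c₀:ℤ) * s15t w := by rw [hc₀def]; push_cast; ring
      exact_mod_cast h1
    have hN0 : (0:ℝ) < (N:ℝ) := by exact_mod_cast hN
    rw [div_le_div_iff₀ ht0 hN0]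
    calc ψ ((s15H w : ℤ) : ℝ) * (N:ℝ) ≤ ψ 1 * ((c₀ : ℝ) * ((s15t w : ℤ) : ℝ)) := by
          apply mul_le_mul hψH hNc (by positivity) hC.le
      _ = ψ 1 * (c₀ : ℝ) * ((s15t w : ℤ) : ℝ) := by ring
  -- per-term bound
  have hterm : ∀ ε' : ℝ, 0 < ε' → ∃ Q : ℕ, 1 ≤ Q ∧ ∀ N : ℕ, c₀ * Q ≤ N →
      ∀ w ∈ s15J R N, m (EMetric.diam (s15E ψ w)) ≤ ENNReal.ofReal
        ((2 * ε' ^ τ) * ((w.1.natAbs : ℝ) * (w.2.1.toNat : ℝ) ^ 2) ^ (-p)) := by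
    intro ε' hε'
    obtain ⟨Qt, hQt1, hQt⟩ := htail ε' hε'
    obtain ⟨Q₁, hQ₁1, hQ₁⟩ := hsmall (min x₀ (x₀ ^ 2 / 4)) (by positivity)
    refine ⟨max Qt Q₁, le_trans hQt1 (le_max_left _ _), ?_⟩
    intro N hN w hw
    obtain ⟨hk, hu, hv, hH⟩ := hw
    have hw' : w ∈ s15J R N := ⟨hk, hu, hv, hH⟩
    have ht1 : 1 ≤ s15t w := s15t_pos hk hu
    set t : ℕ := (s15t w).toNat with htdef
    have htcast : (t : ℤ) = s15t w := Int.toNat_of_nonneg (by linarith)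
    have ht1' : 1 ≤ t := by omega
    have htr : (0:ℝ) < (t:ℝ) := by exact_mod_cast ht1'
    have htQ : max Qt Q₁ ≤ t := by
      have h2 := s15H_le hw'
      have h3 : ((c₀ * max Qt Q₁ : ℕ) : ℤ) ≤ (c₀ : ℤ) * (t : ℤ) := by
        calc ((c₀ * max Qt Q₁ : ℕ) : ℤ) ≤ (N : ℤ) := by exact_mod_cast hN
          _ ≤ s15H w := hH
          _ ≤ 2 * (1 + (R:ℤ)) ^ 2 * s15t w := h2
          _ = (c₀ : ℤ) * (t : ℤ) := by rw [htcast, hc₀def]; push_cast; ring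
      have h4 : (c₀ : ℤ) * (max Qt Q₁ : ℤ) ≤ (c₀ : ℤ) * (t : ℤ) := by
        exact_mod_cast h3
      have h5 := le_of_mul_le_mul_left h4 (by exact_mod_cast hc₀pos)
      exact_mod_cast h5
    set y : ℝ := ψ t / t with hydef
    have hy0 : 0 < y := hψq_pos t ht1'
    have hymin : y < min x₀ (x₀ ^ 2 / 4) := hQ₁ t (le_trans (le_max_right _ _) htQ)
    have hyx₀ : y < x₀ := lt_of_lt_of_le hymin (min_le_left _ _)
    have hysq : y < x₀ ^ 2 / 4 := lt_of_lt_of_le hymin (min_le_right _ _)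
    have h2sq : 2 * Real.sqrt y < x₀ := by
      have hx2 : 0 < x₀ / 2 := by positivity
      have : Real.sqrt y < x₀ / 2 := by
        rw [Real.sqrt_lt' hx2]
        nlinarith
      linarith
    have hchain := stmt15_chain g s₁ s₂ x₀ hs₁ hs₂ hs₂1 hbnd y hy0 hyx₀ h2sq
    -- rad ≤ sqrt y
    have hHt : ((s15t w : ℤ) : ℝ) ≤ ((s15H w : ℤ) : ℝ) := by
      exact_mod_cast s15t_le_H w
    have htreal : ((s15t w : ℤ) : ℝ) = (t : ℝ) := by
      rw [← htcast]
      push_cast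
      ring
    have hψHle : ψ ((s15H w : ℤ) : ℝ) ≤ ψ ((t : ℕ) : ℝ) := by
      apply hψ_dec _ _ (by rw [← htreal]; exact_mod_cast ht1)
      rw [← htreal]
      exact hHt
    have hrad : s15rad ψ w ≤ Real.sqrt y := by
      apply Real.sqrt_le_sqrt
      rw [htreal, hydef]
      gcongr
    have hgle : g (2 * s15rad ψ w) ≤ g (2 * Real.sqrt y) := by
      apply hg_mono
      · have := hrad_pos N w hw'
        linarith
      · linarith
    -- tail bound
    have hbt : b t * (t:ℝ) ^ 3 ≤ ε' := hQt t (le_trans (le_max_left _ _) htQ)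
    have hgy : g y ≤ ε' / (t:ℝ) ^ 3 := by
      rw [le_div_iff₀ (by positivity)]
      exact hbt
    have hgyτ : (g y) ^ τ ≤ (ε' / (t:ℝ) ^ 3) ^ τ :=
      Real.rpow_le_rpow (hg_pos y hy0).le hgy hτ.le
    have hrpow : (ε' / (t:ℝ) ^ 3) ^ τ = ε' ^ τ * (t:ℝ) ^ (-p) := by
      rw [div_eq_mul_inv, Real.mul_rpow hε'.le (by positivity)]
      congr 1
      rw [← Real.rpow_natCast (t:ℝ) 3, ← Real.rpow_neg htr.le, ← Real.rpow_mul htr.le]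
      congr 1
      rw [hpdef]
      push_cast
      ring
    -- identify the base
    have hX : ((w.1.natAbs : ℝ) * (w.2.1.toNat : ℝ) ^ 2) = (t : ℝ) := by
      rw [← htreal]
      have e1 : ((w.1.natAbs : ℕ) : ℤ) = |w.1| := (Int.abs_eq_natAbs w.1).symm
      have e2 : ((w.2.1.toNat : ℕ) : ℤ) = w.2.1 := Int.toNat_of_nonneg hu.le
      have : (w.1.natAbs : ℤ) * ((w.2.1.toNat : ℤ)) ^ 2 = s15t w := by
        rw [e1, e2]; rfl
      calc ((w.1.natAbs : ℝ) * (w.2.1.toNat : ℝ) ^ 2)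
          = (((w.1.natAbs : ℤ) * ((w.2.1.toNat : ℤ)) ^ 2 : ℤ) : ℝ) := by push_cast [Nat.cast_natAbs]; ring
        _ = ((s15t w : ℤ) : ℝ) := by rw [this]
    -- measure of the interval
    have hm1 : m (EMetric.diam (s15E ψ w)) = ENNReal.ofReal (g (2 * s15rad ψ w)) := by
      rw [hdiam N w hw', hm]
      simp only
      rw [ENNReal.toReal_ofReal (by have := hrad_pos N w hw'; positivity)]
    rw [hm1]
    apply ENNReal.ofReal_le_ofReal
    calc g (2 * s15rad ψ w) ≤ g (2 * Real.sqrt y) := hgle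
      _ ≤ 2 * (g y) ^ τ := hchain
      _ ≤ 2 * (ε' ^ τ * (t:ℝ) ^ (-p)) := by
          rw [← hrpow]
          nlinarith [hgyτ]
      _ = (2 * ε' ^ τ) * ((w.1.natAbs : ℝ) * (w.2.1.toNat : ℝ) ^ 2) ^ (-p) := by
          rw [hX]; ring
  -- the key tail bound on the sums
  have key : ∀ δ : ℝ, 0 < δ → ∀ᶠ N in Filter.atTop,
      (∑' i : s15J R N, m (EMetric.diam (s15E ψ (i : ℤ × ℤ × ℤ)))) ≤ ENNReal.ofReal δ := by
    intro δ hδ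
    set CC : ℝ := ((∑' n : ℕ, (n : ℝ) ^ (-p)) + ∑' n : ℕ, ((n : ℝ) + 1) ^ (-p)) *
        ((2 * R + 3) * ∑' n : ℕ, (n : ℝ) ^ (1 - 2 * p)) with hCCdef
    have hCC0 : 0 ≤ CC := by
      apply mul_nonneg
      · apply add_nonneg <;>
          exact tsum_nonneg (fun n => Real.rpow_nonneg (by positivity) _)
      · apply mul_nonneg (by positivity)
        exact tsum_nonneg (fun n => Real.rpow_nonneg (by positivity) _)
    set ε' : ℝ := (δ / (2 * (CC + 1))) ^ (1 / τ) with hε'def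
    have hε' : 0 < ε' := Real.rpow_pos_of_pos (by positivity) _
    have hε'τ : ε' ^ τ = δ / (2 * (CC + 1)) := by
      rw [hε'def, ← Real.rpow_mul (by positivity), one_div_mul_cancel hτ.ne', Real.rpow_one]
    obtain ⟨Q, hQ1, hQ⟩ := hterm ε' hε'
    filter_upwards [Filter.eventually_ge_atTop (c₀ * Q)] with N hN
    have hsum_le := s15_sum R N p (2 * ε' ^ τ) hp (by positivity) (s15J R N)
      (fun w hw => ⟨hw.2.1, hw.2.2.1⟩) (fun w => m (EMetric.diam (s15E ψ w))) (hQ N hN)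
    refine le_trans hsum_le (ENNReal.ofReal_le_ofReal ?_)
    rw [hε'τ, ← hCCdef]
    have hpos : (0:ℝ) < CC + 1 := by linarith
    have e1 : 2 * (δ / (2 * (CC + 1))) * CC = δ * (CC / (CC + 1)) := by
      field_simp
    rw [e1]
    have e2 : CC / (CC + 1) ≤ 1 := (div_le_one hpos).2 (by linarith)
    exact mul_le_of_le_one_right hδ.le e2
  -- apply the covering bound
  set r : ℕ → ℝ≥0∞ := fun N => ENNReal.ofReal (2 * Real.sqrt (ψ 1 * (c₀:ℝ) / N)) with hrdef
  have hr : Filter.Tendsto r Filter.atTop (nhds 0) := by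
    have h1 : Filter.Tendsto (fun N : ℕ => ψ 1 * (c₀:ℝ) / N) Filter.atTop (nhds 0) :=
      tendsto_const_div_atTop_nhds_zero_nat _
    have h2 : Filter.Tendsto (fun N : ℕ => Real.sqrt (ψ 1 * (c₀:ℝ) / N))
        Filter.atTop (nhds 0) := by
      have := (Real.continuous_sqrt.tendsto 0).comp h1
      simpa only [Function.comp_def, Real.sqrt_zero] using this
    have h3 := h2.const_mul 2
    rw [mul_zero] at h3
    have h4 := ENNReal.tendsto_ofReal (f := Filter.atTop) h3
    simpa [hrdef] using h4
  have hmain : Measure.mkMetric m S ≤ Filter.liminf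
      (fun N => ∑' i : s15J R N, m (EMetric.diam (s15E ψ (i : ℤ × ℤ × ℤ))))
      Filter.atTop := by
    apply Measure.mkMetric_le_liminf_tsum (ι := fun N => ↥(s15J R N)) S r hr
      (fun N i => s15E ψ (i : ℤ × ℤ × ℤ)) ?_ ?_ m
    · filter_upwards [Filter.eventually_ge_atTop 1] with N hN
      intro i
      rw [show Metric.ediam (s15E ψ (i : ℤ × ℤ × ℤ)) = _ from hdiam N (i : ℤ × ℤ × ℤ) i.2]
      apply ENNReal.ofReal_le_ofReal
      have := hrad_le N hN (i : ℤ × ℤ × ℤ) i.2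
      linarith
    · exact Filter.Eventually.of_forall hcover
  have hlim : ∀ δ : ℝ, 0 < δ → Measure.mkMetric m S ≤ ENNReal.ofReal δ := by
    intro δ hδ
    exact hmain.trans (Filter.liminf_le_of_frequently_le ((key δ hδ).frequently))
  refine le_antisymm ?_ zero_le
  have hseq : Filter.Tendsto (fun n : ℕ => ENNReal.ofReal (1 / ((n:ℝ) + 1)))
      Filter.atTop (nhds 0) := by
    have h1 : Filter.Tendsto (fun n : ℕ => 1 / ((n:ℝ) + 1)) Filter.atTop (nhds 0) :=
      tendsto_one_div_add_atTop_nhds_zero_nat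
    have h2 := ENNReal.tendsto_ofReal (f := Filter.atTop) h1
    simpa using h2
  exact ge_of_tendsto' hseq (fun n => hlim _ (by positivity))
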